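/- arXiv:1910.09322 — 9 statements merged into one kernel-verified Lean document; each statement's English description precedes it below -/
import Mathlib

section
/- Error propagation bound for Momentum Value Iteration (Theorem 1). For every k ≥ 0, after k+1 iterations of MoVI one has the componentwise inequality q_* − q_{π_{k+1}} ≤ (1/(k+1)) [ (I − γP_{π_*})^{-1} (E_{k+1} + q_{k+1} − q_0) − (I − γP_{π_{k+1}})^{-1} ( Σ_{j=0}^{k−1} γ^j E'_{k,j} + Σ_{j=0}^{k} γ^j P_{j:1} (T_{π_1} q_0 − q_0) ) ]. -/
open Finset MeasureTheory
open scoped MeasureTheory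

set_option linter.unusedSectionVars false
set_option linter.unusedVariables false
set_option linter.unusedTactic false

noncomputable section

namespace MoVIFormal

variable {S A : Type} [Fintype S] [Fintype A] [Nonempty S] [Nonempty A]
  [DecidableEq S] [DecidableEq A]

/-- `P` is a transition kernel: `P sa s'` is the probability of moving to `s'` from
state-action pair `sa`. -/
def IsKernel (P : S × A → S → ℝ) : Prop :=
  (∀ sa s', 0 ≤ P sa s') ∧ ∀ sa, ∑ s', P sa s' = 1

/-- The operator `P_π` acting on `q`-functions. -/
def Pop (P : S × A → S → ℝ) (π : S → A) (q : S × A → ℝ) : S × A → ℝ :=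
  fun sa => ∑ s', P sa s' * q (s', π s')

/-- The Bellman evaluation operator `T_π q = r + γ P_π q`. -/
def Tpol (P : S × A → S → ℝ) (r : S × A → ℝ) (γ : ℝ) (π : S → A) (q : S × A → ℝ) :
    S × A → ℝ :=
  fun sa => r sa + γ * Pop P π q sa

/-- The Bellman optimality operator `T_*`. -/
def Topt (P : S × A → S → ℝ) (r : S × A → ℝ) (γ : ℝ) (q : S × A → ℝ) : S × A → ℝ :=
  fun sa => r sa + γ * ∑ s', P sa s' * (⨆ a', q (s', a'))

/-- `π` is greedy with respect to `q`: `T_π q = T_* q`. -/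
def Greedy (P : S × A → S → ℝ) (r : S × A → ℝ) (γ : ℝ) (π : S → A) (q : S × A → ℝ) :
    Prop :=
  Tpol P r γ π q = Topt P r γ q

/-- The stochastic matrix of the operator `P_π`, so that `P_π q = (Pmat P π).mulVec q`. -/
def Pmat (P : S × A → S → ℝ) (π : S → A) : Matrix (S × A) (S × A) ℝ :=
  fun sa sa' => if sa'.2 = π sa'.1 then P sa sa'.1 else 0

/-- The resolvent matrix `(I - γ P_π)⁻¹`. -/
def Res (P : S × A → S → ℝ) (γ : ℝ) (π : S → A) : Matrix (S × A) (S × A) ℝ :=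
  (1 - γ • Pmat P π)⁻¹

/-- The composed kernels `P_{j:i} = P_{π_j} P_{π_{j-1}} ⋯ P_{π_i}` for `i ≤ j`,
and the identity otherwise. -/
def Pcomp (P : S × A → S → ℝ) (π : ℕ → S → A) (j i : ℕ) : Matrix (S × A) (S × A) ℝ :=
  (((List.range' i (j + 1 - i)).reverse).map fun t => Pmat P (π t)).prod

/-- The MoVI iterates: `π (k+1)` is greedy w.r.t. `h k`,
`q (k+1) = T_{π (k+1)} (q k) + ε (k+1)` and `h k` is the running average of `q 0, …, q k`. -/
def IsMoVI (P : S × A → S → ℝ) (r : S × A → ℝ) (γ : ℝ)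
    (π : ℕ → S → A) (q h : ℕ → S × A → ℝ) (ε : ℕ → S × A → ℝ) : Prop :=
  h 0 = q 0 ∧
  (∀ k : ℕ, Greedy P r γ (π (k + 1)) (h k)) ∧
  (∀ k : ℕ, q (k + 1) = fun sa => Tpol P r γ (π (k + 1)) (q k) sa + ε (k + 1) sa) ∧
  (∀ k : ℕ, h (k + 1) = fun sa => ((k + 1 : ℝ) * h k sa + q (k + 1) sa) / (k + 2))

/-- The negative cumulative error `E_k = -∑_{j=1}^k ε_j`. -/
def Ecum (ε : ℕ → S × A → ℝ) (k : ℕ) : S × A → ℝ :=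
  fun sa => -(∑ j ∈ Finset.Icc 1 k, ε j sa)

/-- The weighted negative cumulative error
`E'_{k,j} = -∑_{i=1}^{k-j} P_{i+j:i+1} (I - γ P_{π_i}) ε_i`. -/
def Ew (P : S × A → S → ℝ) (γ : ℝ) (π : ℕ → S → A) (ε : ℕ → S × A → ℝ)
    (k j : ℕ) : S × A → ℝ :=
  fun sa =>
    -(∑ i ∈ Finset.Icc 1 (k - j),
        (Pcomp P π (i + j) (i + 1)).mulVec ((1 - γ • Pmat P (π i)).mulVec (ε i)) sa)

/-- Supremum norm of a `q`-function. -/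
def supNorm (q : S × A → ℝ) : ℝ := ⨆ sa : S × A, |q sa|

/-- `μ`-weighted `ℓ1`-norm of a `q`-function. -/
def l1Norm (μ : S × A → ℝ) (q : S × A → ℝ) : ℝ := ∑ sa, μ sa * |q sa|

/-- `μ` is a probability distribution on `S × A`. -/
def IsDist (μ : S × A → ℝ) : Prop :=
  (∀ sa, 0 ≤ μ sa) ∧ ∑ sa, μ sa = 1

/-- The discounted cumulative occupancy measure `d_{π,μ} = (1-γ) μ (I - γ P_π)⁻¹`. -/
def docc (P : S × A → S → ℝ) (γ : ℝ) (μ : S × A → ℝ) (π : S → A) : S × A → ℝ :=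
  (1 - γ) • Matrix.vecMul μ (Res P γ π)

/-- Operator norm induced by the supremum norm (maximum absolute row sum). -/
def opNormInf (M : Matrix (S × A) (S × A) ℝ) : ℝ :=
  ⨆ sa : S × A, ∑ sa', |M sa sa'|

/-! ### Auxiliary lemmas -/

section Aux

variable {P : S × A → S → ℝ} {r : S × A → ℝ} {γ : ℝ}

lemma Pmat_nonneg (hP : IsKernel P) (π : S → A) (sa sa' : S × A) :
    0 ≤ Pmat P π sa sa' := by
  unfold Pmat; split <;> simp [hP.1]

lemma Pmat_rowsum (hP : IsKernel P) (π : S → A) (sa : S × A) :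
    ∑ sa', Pmat P π sa sa' = 1 := by
  rw [← hP.2 sa, Fintype.sum_prod_type]
  exact Finset.sum_congr rfl fun s' _ => by simp [Pmat]

lemma Pop_eq_mulVec (π : S → A) (q : S × A → ℝ) :
    Pop P π q = (Pmat P π).mulVec q := by
  funext sa
  rw [Matrix.mulVec, Pop]
  show _ = ∑ sa', Pmat P π sa sa' * q sa'
  rw [Fintype.sum_prod_type]
  exact Finset.sum_congr rfl fun s' _ => by simp [Pmat]

lemma mulVec_mono {M : Matrix (S × A) (S × A) ℝ} (hM : ∀ i j, 0 ≤ M i j)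
    {x y : S × A → ℝ} (hxy : ∀ sa, x sa ≤ y sa) (sa : S × A) :
    M.mulVec x sa ≤ M.mulVec y sa :=
  Finset.sum_le_sum fun j _ => mul_le_mul_of_nonneg_left (hxy j) (hM sa j)

lemma IγP_mulVec (π : S → A) (x : S × A → ℝ) (sa : S × A) :
    (1 - γ • Pmat P π).mulVec x sa = x sa - γ * (Pmat P π).mulVec x sa := by
  rw [Matrix.sub_mulVec, Matrix.smul_mulVec, Matrix.one_mulVec]
  simp

lemma key_pos (hP : IsKernel P) (hγ0 : 0 ≤ γ) (hγ1 : γ < 1) (π : S → A)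
    (x : S × A → ℝ) (hx : ∀ sa, 0 ≤ (1 - γ • Pmat P π).mulVec x sa) (sa : S × A) :
    0 ≤ x sa := by
  obtain ⟨sa₀, _, hmin⟩ := Finset.exists_min_image Finset.univ x ⟨sa, Finset.mem_univ sa⟩
  have h0 : x sa₀ ≤ x sa := hmin sa (Finset.mem_univ sa)
  have h1 : x sa₀ ≤ (Pmat P π).mulVec x sa₀ := by
    have e : x sa₀ = ∑ sa', Pmat P π sa₀ sa' * x sa₀ := by
      rw [← Finset.sum_mul, Pmat_rowsum hP, one_mul]
    rw [e]
    exact Finset.sum_le_sum fun j _ =>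
      mul_le_mul_of_nonneg_left (hmin j (Finset.mem_univ j)) (Pmat_nonneg hP π sa₀ j)
  have h2 := hx sa₀
  rw [IγP_mulVec] at h2
  have h3 : γ * x sa₀ ≤ γ * (Pmat P π).mulVec x sa₀ := mul_le_mul_of_nonneg_left h1 hγ0
  have h4 : 0 ≤ x sa₀ := by nlinarith
  linarith

lemma isUnit_IγP (hP : IsKernel P) (hγ0 : 0 ≤ γ) (hγ1 : γ < 1) (π : S → A) :
    IsUnit (1 - γ • Pmat P π) := by
  rw [← Matrix.mulVec_injective_iff_isUnit]
  intro x y hxy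
  have key : ∀ u v : S × A → ℝ, (1 - γ • Pmat P π).mulVec u = (1 - γ • Pmat P π).mulVec v →
      ∀ sa, v sa ≤ u sa := by
    intro u v huv sa
    have := key_pos hP hγ0 hγ1 π (u - v) (fun sa' => by
      rw [Matrix.mulVec_sub, huv]; simp) sa
    simpa [sub_nonneg] using this
  funext sa
  exact le_antisymm (key y x hxy.symm sa) (key x y hxy sa)

lemma Res_mul_IγP (hP : IsKernel P) (hγ0 : 0 ≤ γ) (hγ1 : γ < 1) (π : S → A) :
    Res P γ π * (1 - γ • Pmat P π) = 1 :=
  Matrix.nonsing_inv_mul _ ((Matrix.isUnit_iff_isUnit_det _).mp (isUnit_IγP hP hγ0 hγ1 π))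

lemma IγP_mul_Res (hP : IsKernel P) (hγ0 : 0 ≤ γ) (hγ1 : γ < 1) (π : S → A) :
    (1 - γ • Pmat P π) * Res P γ π = 1 :=
  Matrix.mul_nonsing_inv _ ((Matrix.isUnit_iff_isUnit_det _).mp (isUnit_IγP hP hγ0 hγ1 π))

lemma Res_apply_IγP (hP : IsKernel P) (hγ0 : 0 ≤ γ) (hγ1 : γ < 1) (π : S → A)
    (x : S × A → ℝ) : (Res P γ π).mulVec ((1 - γ • Pmat P π).mulVec x) = x := by
  rw [Matrix.mulVec_mulVec, Res_mul_IγP hP hγ0 hγ1 π, Matrix.one_mulVec]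

lemma Res_mono (hP : IsKernel P) (hγ0 : 0 ≤ γ) (hγ1 : γ < 1) (π : S → A)
    {x y : S × A → ℝ} (hxy : ∀ sa, x sa ≤ y sa) (sa : S × A) :
    (Res P γ π).mulVec x sa ≤ (Res P γ π).mulVec y sa := by
  have h : ∀ sa', 0 ≤ (1 - γ • Pmat P π).mulVec
      ((Res P γ π).mulVec y - (Res P γ π).mulVec x) sa' := by
    intro sa'
    rw [← Matrix.mulVec_sub, Matrix.mulVec_mulVec, IγP_mul_Res hP hγ0 hγ1 π, Matrix.one_mulVec]
    simpa [sub_nonneg] using hxy sa'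
  have := key_pos hP hγ0 hγ1 π _ h sa
  simpa [sub_nonneg] using this

lemma Pcomp_triv {π : ℕ → S → A} {j i : ℕ} (h : j < i) : Pcomp P π j i = 1 := by
  unfold Pcomp
  rw [Nat.sub_eq_zero_of_le h]
  simp

lemma Pcomp_succ {π : ℕ → S → A} {j i : ℕ} (h : i ≤ j + 1) :
    Pcomp P π (j + 1) i = Pmat P (π (j + 1)) * Pcomp P π j i := by
  unfold Pcomp
  have h1 : j + 1 + 1 - i = (j + 1 - i) + 1 := by omega
  rw [h1, List.range'_1_concat]
  have h2 : i + (j + 1 - i) = j + 1 := by omega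
  rw [h2]
  simp

lemma Pcomp_nonneg (hP : IsKernel P) (π : ℕ → S → A) (j i : ℕ) (a b : S × A) :
    0 ≤ Pcomp P π j i a b := by
  induction j generalizing a b with
  | zero =>
    rcases Nat.lt_or_ge 0 i with h | h
    · rw [Pcomp_triv h, Matrix.one_apply]; split <;> norm_num
    · interval_cases i
      have e : Pcomp P π 0 0 = Pmat P (π 0) := by unfold Pcomp; simp
      rw [e]; exact Pmat_nonneg hP _ a b
  | succ j ih =>
    rcases Nat.lt_or_ge (j + 1) i with h | h
    · rw [Pcomp_triv h, Matrix.one_apply]; split <;> norm_num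
    · rw [Pcomp_succ h]
      exact Finset.sum_nonneg fun c _ => mul_nonneg (Pmat_nonneg hP _ a c) (ih c b)

lemma mulVec_smul_fun (M : Matrix (S × A) (S × A) ℝ) (a : ℝ) (u : S × A → ℝ) (x : S × A) :
    M.mulVec (fun y => a * u y) x = a * M.mulVec u x := by
  simp only [Matrix.mulVec, dotProduct, Finset.mul_sum]
  exact Finset.sum_congr rfl fun y _ => by ring

lemma mulVec_sum_fun {ι : Type*} (M : Matrix (S × A) (S × A) ℝ) (s : Finset ι)
    (f : ι → S × A → ℝ) (x : S × A) :
    M.mulVec (fun y => ∑ i ∈ s, f i y) x = ∑ i ∈ s, M.mulVec (f i) x := by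
  simp only [Matrix.mulVec, dotProduct, Finset.mul_sum]
  exact Finset.sum_comm

lemma mulVec_sub_fun (M : Matrix (S × A) (S × A) ℝ) (u v : S × A → ℝ) (x : S × A) :
    M.mulVec (fun y => u y - v y) x = M.mulVec u x - M.mulVec v x := by
  simp only [Matrix.mulVec, dotProduct, mul_sub, Finset.sum_sub_distrib]

lemma reindex_sum (k : ℕ) (g : ℕ → ℕ → ℝ) :
    ∑ t ∈ range (k + 1), ∑ i ∈ Icc 1 t, g t i
      = ∑ j ∈ range k, ∑ i ∈ Icc 1 (k - j), g (i + j) i := by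
  rw [Finset.sum_sigma', Finset.sum_sigma']
  refine Finset.sum_nbij' (fun p => ⟨p.1 - p.2, p.2⟩) (fun p => ⟨p.2 + p.1, p.2⟩) ?_ ?_ ?_ ?_ ?_
  · rintro ⟨t, i⟩ hp
    simp only [Finset.mem_sigma, Finset.mem_range, Finset.mem_Icc] at hp ⊢
    omega
  · rintro ⟨j, i⟩ hp
    simp only [Finset.mem_sigma, Finset.mem_range, Finset.mem_Icc] at hp ⊢
    omega
  · rintro ⟨t, i⟩ hp
    simp only [Finset.mem_sigma, Finset.mem_range, Finset.mem_Icc] at hp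
    simp only [Sigma.mk.inj_iff]
    exact ⟨by omega, HEq.rfl⟩
  · rintro ⟨j, i⟩ hp
    simp only [Finset.mem_sigma, Finset.mem_range, Finset.mem_Icc] at hp
    simp only [Sigma.mk.inj_iff]
    exact ⟨by omega, HEq.rfl⟩
  · rintro ⟨t, i⟩ hp
    simp only [Finset.mem_sigma, Finset.mem_range, Finset.mem_Icc] at hp
    have e : i + (t - i) = t := by omega
    rw [e]

end Aux

/-! ### MoVI iteration lemmas -/

section MoVI

variable (P : S × A → S → ℝ) (r : S × A → ℝ) (γ : ℝ)
  (π : ℕ → S → A) (q h : ℕ → S × A → ℝ) (ε : ℕ → S × A → ℝ)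

/-- `D_k^{(ρ)} = ∑_{i=0}^k (T_ρ q_i - q_i)`. -/
def Dv (ρ : S → A) (k : ℕ) : S × A → ℝ :=
  fun sa => ∑ i ∈ range (k + 1), (Tpol P r γ ρ (q i) sa - q i sa)

/-- Increments of `D_k := D_k^{(π_{k+1})}`. -/
def Fv : ℕ → S × A → ℝ
  | 0 => Dv P r γ q (π 1) 0
  | (k + 1) => fun sa => Dv P r γ q (π (k + 2)) (k + 1) sa - Dv P r γ q (π (k + 1)) k sa

/-- `(I - γ P_{π_i}) ε_i`. -/
def cEv (i : ℕ) : S × A → ℝ := (1 - γ • Pmat P (π i)).mulVec (ε i)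

/-- Explicit lower bound for `Fv`. -/
def Gv (k : ℕ) : S × A → ℝ :=
  fun sa => γ ^ k * (Pcomp P π k 1).mulVec (Dv P r γ q (π 1) 0) sa -
    ∑ i ∈ Icc 1 k, γ ^ (k - i) * (Pcomp P π k (i + 1)).mulVec (cEv P γ π ε i) sa

variable {P r γ π q h ε}

variable (hP : IsKernel P) (hγ0 : 0 < γ) (hγ1 : γ < 1)
  (hm : IsMoVI P r γ π q h ε)

include hm in
lemma hsum (k : ℕ) (sa : S × A) :
    ((k : ℝ) + 1) * h k sa = ∑ i ∈ range (k + 1), q i sa := by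
  induction k with
  | zero => simp [hm.1]
  | succ k ih =>
    have e := congrFun (hm.2.2.2 k) sa
    rw [Finset.sum_range_succ, ← ih, e]
    push_cast
    field_simp
    ring

include hm in
lemma q_succ (k : ℕ) (sa : S × A) :
    q (k + 1) sa = Tpol P r γ (π (k + 1)) (q k) sa + ε (k + 1) sa :=
  congrFun (hm.2.2.1 k) sa

include hγ0 hP hm in
lemma Tpol_le_greedy (k : ℕ) (ρ : S → A) (sa : S × A) :
    Tpol P r γ ρ (h k) sa ≤ Tpol P r γ (π (k + 1)) (h k) sa := by
  rw [hm.2.1 k]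
  unfold Tpol Topt
  refine add_le_add_right (mul_le_mul_of_nonneg_left ?_ hγ0.le) _
  refine Finset.sum_le_sum fun s' _ => mul_le_mul_of_nonneg_left ?_ (hP.1 sa s')
  exact le_ciSup (f := fun a' => h k (s', a')) (Set.Finite.bddAbove (Set.finite_range _)) (ρ s')

include hm in
lemma Dv_eq (ρ : S → A) (k : ℕ) (sa : S × A) :
    Dv P r γ q ρ k sa = ((k : ℝ) + 1) * (Tpol P r γ ρ (h k) sa - h k sa) := by
  have h1 : ∑ i ∈ range (k + 1), q i sa = ((k : ℝ) + 1) * h k sa := (hsum hm k sa).symm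
  have h2 : ∑ i ∈ range (k + 1), Pop P ρ (q i) sa = ((k : ℝ) + 1) * Pop P ρ (h k) sa := by
    simp only [Pop]
    rw [Finset.sum_comm, Finset.mul_sum]
    refine Finset.sum_congr rfl fun s' _ => ?_
    rw [← Finset.mul_sum, ← hsum hm k]
    ring
  simp only [Dv, Tpol]
  rw [Finset.sum_sub_distrib, Finset.sum_add_distrib, h1, ← Finset.mul_sum, h2,
    Finset.sum_const, Finset.card_range]
  push_cast
  ring

include hP hγ0 hm in
lemma Dv_le (k : ℕ) (ρ : S → A) (sa : S × A) :
    Dv P r γ q ρ k sa ≤ Dv P r γ q (π (k + 1)) k sa := by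
  rw [Dv_eq hm ρ k sa, Dv_eq hm (π (k + 1)) k sa]
  have hk : (0 : ℝ) ≤ (k : ℝ) + 1 := by positivity
  exact mul_le_mul_of_nonneg_left
    (sub_le_sub_right (Tpol_le_greedy hP hγ0 hm k ρ sa) _) hk

lemma Dv_succ (ρ : S → A) (k : ℕ) (sa : S × A) :
    Dv P r γ q ρ (k + 1) sa
      = Dv P r γ q ρ k sa + (Tpol P r γ ρ (q (k + 1)) sa - q (k + 1) sa) :=
  Finset.sum_range_succ _ _

lemma Dv_zero (ρ : S → A) (sa : S × A) :
    Dv P r γ q ρ 0 sa = Tpol P r γ ρ (q 0) sa - q 0 sa := by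
  unfold Dv; rw [Finset.sum_range_one]

lemma Ecum_succ (k : ℕ) (sa : S × A) :
    Ecum ε (k + 1) sa = Ecum ε k sa - ε (k + 1) sa := by
  unfold Ecum
  rw [Finset.sum_Icc_succ_top (by omega : 1 ≤ k + 1)]
  ring

include hP hγ0 hm in
lemma upperA (k : ℕ) (sa : S × A) :
    Dv P r γ q (π (k + 1)) k sa ≤ Ecum ε (k + 1) sa + q (k + 1) sa - q 0 sa := by
  induction k with
  | zero =>
    rw [Dv_zero]
    have e1 := q_succ hm 0 sa
    have e2 : Ecum ε 1 sa = -ε 1 sa := by unfold Ecum; simp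
    linarith
  | succ k ih =>
    have e1 := Dv_succ (P := P) (r := r) (γ := γ) (q := q) (π (k + 2)) k sa
    have e2 := Dv_le hP hγ0 hm k (π (k + 2)) sa
    have e3 := q_succ hm (k + 1) sa
    have e4 := Ecum_succ (ε := ε) (k + 1) sa
    linarith

include hP hγ0 hm in
lemma m_ge_F (k : ℕ) (sa : S × A) :
    Fv P r γ π q k sa ≤ Tpol P r γ (π (k + 1)) (q k) sa - q k sa := by
  cases k with
  | zero => rw [Fv, Dv_zero]
  | succ k =>
    show Dv P r γ q (π (k + 2)) (k + 1) sa - Dv P r γ q (π (k + 1)) k sa ≤ _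
    have e1 := Dv_succ (P := P) (r := r) (γ := γ) (q := q) (π (k + 2)) k sa
    have e2 := Dv_le hP hγ0 hm k (π (k + 2)) sa
    linarith

include hm in
lemma pop_delta (k : ℕ) (sa : S × A) :
    Tpol P r γ (π (k + 1)) (q (k + 1)) sa - q (k + 1) sa
      = γ * Pop P (π (k + 1)) (fun z => q (k + 1) z - q k z) sa - ε (k + 1) sa := by
  have e1 := q_succ hm k sa
  have e2 : Pop P (π (k + 1)) (fun z => q (k + 1) z - q k z) sa
      = Pop P (π (k + 1)) (q (k + 1)) sa - Pop P (π (k + 1)) (q k) sa := by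
    unfold Pop
    simp only [mul_sub, Finset.sum_sub_distrib]
  rw [e2]
  simp only [Tpol] at e1 ⊢
  linarith

include hP hγ0 hγ1 hm in
lemma Fv_rec (k : ℕ) (sa : S × A) :
    γ * (Pmat P (π (k + 1))).mulVec (Fv P r γ π q k) sa
      - (1 - γ • Pmat P (π (k + 1))).mulVec (ε (k + 1)) sa ≤ Fv P r γ π q (k + 1) sa := by
  -- Fv (k+1) ≥ T_{π_{k+1}} q_{k+1} - q_{k+1}
  have step1 : Tpol P r γ (π (k + 1)) (q (k + 1)) sa - q (k + 1) sa
      ≤ Fv P r γ π q (k + 1) sa := by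
    show _ ≤ Dv P r γ q (π (k + 2)) (k + 1) sa - Dv P r γ q (π (k + 1)) k sa
    have e1 := Dv_le hP hγ0 hm (k + 1) (π (k + 1)) sa
    have e2 := Dv_succ (P := P) (r := r) (γ := γ) (q := q) (π (k + 1)) k sa
    linarith
  have step2 := pop_delta hm k sa
  -- q (k+1) - q k = m + ε (k+1), and m ≥ Fv k
  have step3 : ∀ z, Fv P r γ π q k z + ε (k + 1) z ≤ q (k + 1) z - q k z := by
    intro z
    have := m_ge_F hP hγ0 hm k z
    have e := q_succ hm k z
    linarith
  have step4 : Pop P (π (k + 1)) (fun z => Fv P r γ π q k z + ε (k + 1) z) sa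
      ≤ Pop P (π (k + 1)) (fun z => q (k + 1) z - q k z) sa :=
    Finset.sum_le_sum fun s' _ => mul_le_mul_of_nonneg_left (step3 _) (hP.1 sa s')
  have step5 : Pop P (π (k + 1)) (fun z => Fv P r γ π q k z + ε (k + 1) z) sa
      = (Pmat P (π (k + 1))).mulVec (Fv P r γ π q k) sa
        + (Pmat P (π (k + 1))).mulVec (ε (k + 1)) sa := by
    unfold Pop
    rw [← congrFun (Pop_eq_mulVec (π (k + 1)) (Fv P r γ π q k)) sa,
      ← congrFun (Pop_eq_mulVec (π (k + 1)) (ε (k + 1))) sa]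
    unfold Pop
    simp only [mul_add, Finset.sum_add_distrib]
  have step6 := IγP_mulVec (P := P) (γ := γ) (π (k + 1)) (ε (k + 1)) sa
  have hγ : 0 ≤ γ := hγ0.le
  have step7 : γ * Pop P (π (k + 1)) (fun z => Fv P r γ π q k z + ε (k + 1) z) sa
      = γ * (Pmat P (π (k + 1))).mulVec (Fv P r γ π q k) sa
        + γ * (Pmat P (π (k + 1))).mulVec (ε (k + 1)) sa := by
    rw [step5]; ring
  have step8 := mul_le_mul_of_nonneg_left step4 hγ
  linarith

include hP in
lemma Gv_rec (k : ℕ) (sa : S × A) :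
    Gv P r γ π q ε (k + 1) sa
      = γ * (Pmat P (π (k + 1))).mulVec (Gv P r γ π q ε k) sa
        - (1 - γ • Pmat P (π (k + 1))).mulVec (ε (k + 1)) sa := by
  have hGv : Gv P r γ π q ε k = fun y =>
      γ ^ k * (Pcomp P π k 1).mulVec (Dv P r γ q (π 1) 0) y
        - ∑ i ∈ Icc 1 k, γ ^ (k - i) * (Pcomp P π k (i + 1)).mulVec (cEv P γ π ε i) y := rfl
  have hmv : (Pmat P (π (k + 1))).mulVec (Gv P r γ π q ε k) sa
      = γ ^ k * (Pmat P (π (k + 1)) * Pcomp P π k 1).mulVec (Dv P r γ q (π 1) 0) sa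
        - ∑ i ∈ Icc 1 k, γ ^ (k - i) *
            (Pmat P (π (k + 1)) * Pcomp P π k (i + 1)).mulVec (cEv P γ π ε i) sa := by
    rw [hGv, mulVec_sub_fun]
    congr 1
    · rw [mulVec_smul_fun, Matrix.mulVec_mulVec]
    · rw [mulVec_sum_fun]
      exact Finset.sum_congr rfl fun i _ => by
        rw [mulVec_smul_fun, Matrix.mulVec_mulVec]
  rw [hmv]
  unfold Gv
  rw [Finset.sum_Icc_succ_top (by omega : 1 ≤ k + 1)]
  have etop : (Pcomp P π (k + 1) (k + 1 + 1)) = 1 := Pcomp_triv (by omega)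
  rw [etop]
  have e1 : Pcomp P π (k + 1) 1 = Pmat P (π (k + 1)) * Pcomp P π k 1 :=
    Pcomp_succ (by omega)
  have e2 : ∀ i ∈ Icc 1 k, γ ^ (k + 1 - i) *
      (Pcomp P π (k + 1) (i + 1)).mulVec (cEv P γ π ε i) sa
      = γ * (γ ^ (k - i) * (Pmat P (π (k + 1)) * Pcomp P π k (i + 1)).mulVec
          (cEv P γ π ε i) sa) := by
    intro i hi
    rw [Finset.mem_Icc] at hi
    have h3 : Pcomp P π (k + 1) (i + 1) = Pmat P (π (k + 1)) * Pcomp P π k (i + 1) :=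
      Pcomp_succ (by omega)
    rw [h3]
    have h4 : k + 1 - i = (k - i) + 1 := by omega
    rw [h4, pow_succ']
    ring
  rw [Finset.sum_congr rfl e2, e1]
  have hc : cEv P γ π ε (k + 1) sa
      = (1 - γ • Pmat P (π (k + 1))).mulVec (ε (k + 1)) sa := by
    simp [cEv, Matrix.one_mulVec]
  simp only [Nat.sub_self, pow_zero, one_mul, Matrix.one_mulVec]
  rw [mul_sub, Finset.mul_sum, pow_succ']
  have : (1 - γ • Pmat P (π (k + 1))).mulVec (ε (k + 1)) sa
      = cEv P γ π ε (k + 1) sa := rfl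
  rw [← this]
  ring


include hP hγ0 hγ1 hm in
lemma Fv_ge_Gv (k : ℕ) : ∀ sa, Gv P r γ π q ε k sa ≤ Fv P r γ π q k sa := by
  induction k with
  | zero =>
    intro sa
    have e : Gv P r γ π q ε 0 sa = Fv P r γ π q 0 sa := by
      unfold Gv
      rw [Pcomp_triv (by omega : (0:ℕ) < 1)]
      simp [Fv, Matrix.one_mulVec]
    exact le_of_eq e
  | succ k ih =>
    intro sa
    rw [Gv_rec hP k sa]
    have h1 : (Pmat P (π (k + 1))).mulVec (Gv P r γ π q ε k) sa
        ≤ (Pmat P (π (k + 1))).mulVec (Fv P r γ π q k) sa :=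
      mulVec_mono (Pmat_nonneg hP _) ih sa
    have h2 := Fv_rec hP hγ0 hγ1 hm k sa
    have h3 := mul_le_mul_of_nonneg_left h1 hγ0.le
    linarith

lemma sum_Fv (k : ℕ) (sa : S × A) :
    ∑ t ∈ range (k + 1), Fv P r γ π q t sa = Dv P r γ q (π (k + 1)) k sa := by
  induction k with
  | zero => simp [Fv]
  | succ k ih =>
    rw [Finset.sum_range_succ, ih]
    show _ + (Dv P r γ q (π (k + 2)) (k + 1) sa - Dv P r γ q (π (k + 1)) k sa) = _
    ring

include hP hγ0 hγ1 hm in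
lemma lowerB (k : ℕ) (sa : S × A) :
    (∑ j ∈ range k, γ ^ j * Ew P γ π ε k j sa) +
      ∑ j ∈ range (k + 1), γ ^ j *
        (Pcomp P π j 1).mulVec (fun sa'' => Tpol P r γ (π 1) (q 0) sa'' - q 0 sa'') sa
      ≤ Dv P r γ q (π (k + 1)) k sa := by
  have hF0 : Dv P r γ q (π 1) 0 = fun sa'' => Tpol P r γ (π 1) (q 0) sa'' - q 0 sa'' :=
    funext fun sa'' => Dv_zero (π 1) sa''
  have hG : ∑ t ∈ range (k + 1), Gv P r γ π q ε t sa
      = (∑ j ∈ range k, γ ^ j * Ew P γ π ε k j sa) +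
        ∑ j ∈ range (k + 1), γ ^ j *
          (Pcomp P π j 1).mulVec (fun sa'' => Tpol P r γ (π 1) (q 0) sa'' - q 0 sa'') sa := by
    unfold Gv
    rw [Finset.sum_sub_distrib]
    rw [reindex_sum k (fun t i => γ ^ (t - i) * (Pcomp P π t (i + 1)).mulVec (cEv P γ π ε i) sa)]
    simp only [Nat.add_sub_cancel_left]  -- hope: rewrites i + j - i
    have hEw : ∀ j, γ ^ j * Ew P γ π ε k j sa
        = -(∑ i ∈ Icc 1 (k - j), γ ^ j * (Pcomp P π (i + j) (i + 1)).mulVec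
            (cEv P γ π ε i) sa) := by
      intro j
      simp only [Ew, cEv, mul_neg, Finset.mul_sum]
    rw [hF0]
    rw [Finset.sum_congr rfl fun j _ => hEw j]
    simp only [Finset.sum_neg_distrib]
    ring
  rw [← hG, ← sum_Fv k sa]
  exact Finset.sum_le_sum fun t _ => Fv_ge_Gv hP hγ0 hγ1 hm t sa

include hP hγ1 in
lemma qpi_sub (hγ0' : 0 ≤ γ) (ρ : S → A) (w x : S × A → ℝ)
    (hw : Tpol P r γ ρ w = w) (sa : S × A) :
    w sa - x sa = (Res P γ ρ).mulVec (fun sa' => Tpol P r γ ρ x sa' - x sa') sa := by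
  have hkey : (1 - γ • Pmat P ρ).mulVec (fun sa' => w sa' - x sa')
      = fun sa' => Tpol P r γ ρ x sa' - x sa' := by
    funext sa'
    rw [IγP_mulVec, mulVec_sub_fun]
    have hw' := congrFun hw sa'
    have hPw := (congrFun (Pop_eq_mulVec (P := P) ρ w) sa').symm
    have hPx := (congrFun (Pop_eq_mulVec (P := P) ρ x) sa').symm
    simp only [Tpol] at hw' ⊢
    rw [hPw, hPx]
    linarith
  have e := congrFun (Res_apply_IγP hP hγ0' hγ1 ρ (fun sa' => w sa' - x sa')) sa
  rw [hkey] at e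
  exact e.symm

end MoVI

/-- Theorem 1 (error propagation for MoVI), componentwise. -/
theorem movi_error_propagation (P : S × A → S → ℝ) (hP : IsKernel P)
    (r : S × A → ℝ) (γ : ℝ) (hγ0 : 0 < γ) (hγ1 : γ < 1)
    (qpi : (S → A) → S × A → ℝ)
    (hqpi : ∀ π' : S → A, Tpol P r γ π' (qpi π') = qpi π')
    (πstar : S → A) (hopt : ∀ (π' : S → A) (sa : S × A), qpi π' sa ≤ qpi πstar sa)
    (π : ℕ → S → A) (q h : ℕ → S × A → ℝ) (ε : ℕ → S × A → ℝ)
    (hmovi : IsMoVI P r γ π q h ε) (k : ℕ) :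
    ∀ sa : S × A,
      qpi πstar sa - qpi (π (k + 1)) sa ≤
        (1 / (k + 1 : ℝ)) *
          ((Res P γ πstar).mulVec
              (fun sa' => Ecum ε (k + 1) sa' + q (k + 1) sa' - q 0 sa') sa -
            (Res P γ (π (k + 1))).mulVec
              (fun sa' =>
                (∑ j ∈ Finset.range k, γ ^ j * Ew P γ π ε k j sa') +
                  ∑ j ∈ Finset.range (k + 1),
                    γ ^ j *
                      (Pcomp P π j 1).mulVec
                        (fun sa'' => Tpol P r γ (π 1) (q 0) sa'' - q 0 sa'') sa') sa) := by
  intro sa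
  have hγ0' : (0:ℝ) ≤ γ := hγ0.le
  have e1 : qpi πstar sa - h k sa
      = (Res P γ πstar).mulVec (fun sa' => Tpol P r γ πstar (h k) sa' - h k sa') sa :=
    qpi_sub hP hγ1 hγ0' πstar (qpi πstar) (h k) (hqpi πstar) sa
  have e2 : qpi (π (k + 1)) sa - h k sa
      = (Res P γ (π (k + 1))).mulVec
          (fun sa' => Tpol P r γ (π (k + 1)) (h k) sa' - h k sa') sa :=
    qpi_sub hP hγ1 hγ0' (π (k + 1)) (qpi (π (k + 1))) (h k) (hqpi (π (k + 1))) sa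
  have key1 : (Res P γ πstar).mulVec (Dv P r γ q πstar k) sa
      = ((k : ℝ) + 1) * (Res P γ πstar).mulVec
          (fun sa' => Tpol P r γ πstar (h k) sa' - h k sa') sa := by
    have hD : Dv P r γ q πstar k
        = fun sa' => ((k : ℝ) + 1) * (Tpol P r γ πstar (h k) sa' - h k sa') :=
      funext fun sa' => Dv_eq hmovi πstar k sa'
    rw [hD, mulVec_smul_fun]
  have key2 : (Res P γ (π (k + 1))).mulVec (Dv P r γ q (π (k + 1)) k) sa
      = ((k : ℝ) + 1) * (Res P γ (π (k + 1))).mulVec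
          (fun sa' => Tpol P r γ (π (k + 1)) (h k) sa' - h k sa') sa := by
    have hD : Dv P r γ q (π (k + 1)) k
        = fun sa' => ((k : ℝ) + 1) * (Tpol P r γ (π (k + 1)) (h k) sa' - h k sa') :=
      funext fun sa' => Dv_eq hmovi (π (k + 1)) k sa'
    rw [hD, mulVec_smul_fun]
  have hc : (0:ℝ) < (k : ℝ) + 1 := by positivity
  have hval : qpi πstar sa - qpi (π (k + 1)) sa
      = (1 / ((k : ℝ) + 1)) * ((Res P γ πstar).mulVec (Dv P r γ q πstar k) sa
        - (Res P γ (π (k + 1))).mulVec (Dv P r γ q (π (k + 1)) k) sa) := by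
    rw [key1, key2, ← e1, ← e2]
    field_simp
    ring
  have b1 : ∀ sa', Dv P r γ q πstar k sa'
      ≤ Ecum ε (k + 1) sa' + q (k + 1) sa' - q 0 sa' := fun sa' =>
    le_trans (Dv_le hP hγ0 hmovi k πstar sa') (upperA hP hγ0 hmovi k sa')
  have m1 : (Res P γ πstar).mulVec (Dv P r γ q πstar k) sa
      ≤ (Res P γ πstar).mulVec
          (fun sa' => Ecum ε (k + 1) sa' + q (k + 1) sa' - q 0 sa') sa :=
    Res_mono hP hγ0' hγ1 πstar b1 sa
  have b2 : ∀ sa', (fun sa'0 => (∑ j ∈ Finset.range k, γ ^ j * Ew P γ π ε k j sa'0) +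
        ∑ j ∈ Finset.range (k + 1), γ ^ j * (Pcomp P π j 1).mulVec
          (fun sa'' => Tpol P r γ (π 1) (q 0) sa'' - q 0 sa'') sa'0) sa'
      ≤ Dv P r γ q (π (k + 1)) k sa' := fun sa' => lowerB hP hγ0 hγ1 hmovi k sa'
  have m2 : (Res P γ (π (k + 1))).mulVec
        (fun sa'0 => (∑ j ∈ Finset.range k, γ ^ j * Ew P γ π ε k j sa'0) +
          ∑ j ∈ Finset.range (k + 1), γ ^ j * (Pcomp P π j 1).mulVec
            (fun sa'' => Tpol P r γ (π 1) (q 0) sa'' - q 0 sa'') sa'0) sa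
      ≤ (Res P γ (π (k + 1))).mulVec (Dv P r γ q (π (k + 1)) k) sa :=
    Res_mono hP hγ0' hγ1 (π (k + 1)) b2 sa
  rw [hval]
  exact mul_le_mul_of_nonneg_left (by linarith) (by positivity)



end MoVIFormal
end
end

section
/- Greedy decomposition bound. Let h : S×A → ℝ be arbitrary and let π' be a policy greedy with respect to h (π' ∈ 𝒢(h)). Then, componentwise, q_* − q_{π'} ≤ (I − γP_{π_*})^{-1} (T_{π'} h − h) − (I − γP_{π'})^{-1} (T_{π'} h − h). -/
open Finset MeasureTheory
open scoped MeasureTheory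

noncomputable section

namespace MoVIFormal

variable {S A : Type} [Fintype S] [Fintype A] [Nonempty S] [Nonempty A]
  [DecidableEq S] [DecidableEq A]

section Aux

variable {S A : Type} [Fintype S] [Fintype A] [Nonempty S] [Nonempty A]
  [DecidableEq S] [DecidableEq A]

lemma pmat_nonneg (P : S × A → S → ℝ) (hP : IsKernel P) (π : S → A) (sa sa' : S × A) :
    0 ≤ Pmat P π sa sa' := by
  unfold Pmat; split
  · exact hP.1 sa sa'.1
  · exact le_rfl

lemma pmat_rowsum (P : S × A → S → ℝ) (hP : IsKernel P) (π : S → A) (sa : S × A) :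
    ∑ sa', Pmat P π sa sa' = 1 := by
  rw [Fintype.sum_prod_type]
  have : ∀ s' : S, ∑ a' : A, Pmat P π sa (s', a') = P sa s' := by
    intro s'
    simp [Pmat]
  simp only [this]
  exact hP.2 sa

lemma pmat_mulVec (P : S × A → S → ℝ) (π : S → A) (q : S × A → ℝ) (sa : S × A) :
    (Pmat P π).mulVec q sa = Pop P π q sa := by
  simp only [Matrix.mulVec, dotProduct, Pop, Fintype.sum_prod_type, Pmat]
  refine Finset.sum_congr rfl fun s' _ => ?_
  simp

lemma M_mulVec (P : S × A → S → ℝ) (γ : ℝ) (π : S → A) (w : S × A → ℝ) (sa : S × A) :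
    (1 - γ • Pmat P π).mulVec w sa = w sa - γ * Pop P π w sa := by
  rw [Matrix.sub_mulVec, Matrix.smul_mulVec, Matrix.one_mulVec]
  simp [pmat_mulVec]

lemma nonneg_of_solve (P : S × A → S → ℝ) (hP : IsKernel P) (γ : ℝ)
    (hγ0 : 0 ≤ γ) (hγ1 : γ < 1) (π : S → A) (w : S × A → ℝ)
    (hw : ∀ sa, 0 ≤ (1 - γ • Pmat P π).mulVec w sa) : ∀ sa, 0 ≤ w sa := by
  obtain ⟨sa0, -, hmin⟩ := Finset.exists_min_image Finset.univ w ⟨Classical.arbitrary _, Finset.mem_univ _⟩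
  have hmin' : ∀ sa, w sa0 ≤ w sa := fun sa => hmin sa (Finset.mem_univ sa)
  have h1 := hw sa0
  rw [M_mulVec] at h1
  have h2 : w sa0 ≤ Pop P π w sa0 := by
    unfold Pop
    calc w sa0 = ∑ s', P sa0 s' * w sa0 := by
          rw [← Finset.sum_mul, hP.2 sa0, one_mul]
      _ ≤ ∑ s', P sa0 s' * w (s', π s') :=
          Finset.sum_le_sum fun s' _ => mul_le_mul_of_nonneg_left (hmin' _) (hP.1 sa0 s')
  have h3 : γ * w sa0 ≤ γ * Pop P π w sa0 := mul_le_mul_of_nonneg_left h2 hγ0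
  intro sa
  have : 0 ≤ w sa0 := by nlinarith
  linarith [hmin' sa]

lemma M_isUnit (P : S × A → S → ℝ) (hP : IsKernel P) (γ : ℝ)
    (hγ0 : 0 ≤ γ) (hγ1 : γ < 1) (π : S → A) :
    IsUnit (1 - γ • Pmat P π).det := by
  by_contra hdet
  have : (1 - γ • Pmat P π).det = 0 := by
    rcases eq_or_ne (1 - γ • Pmat P π).det 0 with h | h
    · exact h
    · exact absurd (isUnit_iff_ne_zero.mpr h) hdet
  obtain ⟨v, hv0, hv⟩ := (Matrix.exists_mulVec_eq_zero_iff).2 this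
  have h1 : ∀ sa, 0 ≤ v sa := by
    apply nonneg_of_solve P hP γ hγ0 hγ1 π
    intro sa; rw [hv]; simp
  have h2 : ∀ sa, 0 ≤ -v sa := by
    have : (1 - γ • Pmat P π).mulVec (-v) = 0 := by
      rw [Matrix.mulVec_neg, hv]; simp
    intro sa
    exact nonneg_of_solve P hP γ hγ0 hγ1 π (-v) (by intro sa'; rw [this]; simp) sa
  exact hv0 (funext fun sa => by
    have := h1 sa; have := h2 sa
    simp only [Pi.zero_apply]; linarith)

lemma res_mul (P : S × A → S → ℝ) (hP : IsKernel P) (γ : ℝ)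
    (hγ0 : 0 ≤ γ) (hγ1 : γ < 1) (π : S → A) :
    Res P γ π * (1 - γ • Pmat P π) = 1 :=
  Matrix.nonsing_inv_mul _ (M_isUnit P hP γ hγ0 hγ1 π)

lemma mul_res (P : S × A → S → ℝ) (hP : IsKernel P) (γ : ℝ)
    (hγ0 : 0 ≤ γ) (hγ1 : γ < 1) (π : S → A) :
    (1 - γ • Pmat P π) * Res P γ π = 1 :=
  Matrix.mul_nonsing_inv _ (M_isUnit P hP γ hγ0 hγ1 π)

/-- If `(I - γ P_π) x ≤ y` componentwise then `x ≤ (I - γ P_π)⁻¹ y`. -/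
lemma solve_le (P : S × A → S → ℝ) (hP : IsKernel P) (γ : ℝ)
    (hγ0 : 0 ≤ γ) (hγ1 : γ < 1) (π : S → A) (x y : S × A → ℝ)
    (hxy : ∀ sa, (1 - γ • Pmat P π).mulVec x sa ≤ y sa) :
    ∀ sa, x sa ≤ (Res P γ π).mulVec y sa := by
  set M := 1 - γ • Pmat P π with hM
  have hx : x = (Res P γ π).mulVec (M.mulVec x) := by
    rw [Matrix.mulVec_mulVec, res_mul P hP γ hγ0 hγ1 π, Matrix.one_mulVec]
  have key : ∀ sa, 0 ≤ (Res P γ π).mulVec (fun sa' => y sa' - M.mulVec x sa') sa := by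
    apply nonneg_of_solve P hP γ hγ0 hγ1 π
    intro sa
    rw [show (fun sa' => y sa' - M.mulVec x sa') = (y - M.mulVec x) from rfl,
      Matrix.mulVec_mulVec, mul_res P hP γ hγ0 hγ1 π, Matrix.one_mulVec]
    simp only [Pi.sub_apply, sub_nonneg]
    exact hxy sa
  intro sa
  have := key sa
  rw [show (fun sa' => y sa' - M.mulVec x sa') = (y - M.mulVec x) from rfl,
    Matrix.mulVec_sub] at this
  have hsub : (Res P γ π).mulVec (M.mulVec x) = x := hx.symm
  rw [hsub] at this
  simp only [Pi.sub_apply, sub_nonneg] at this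
  exact this

/-- If `(I - γ P_π) x = y` then `x = (I - γ P_π)⁻¹ y`. -/
lemma solve_eq (P : S × A → S → ℝ) (hP : IsKernel P) (γ : ℝ)
    (hγ0 : 0 ≤ γ) (hγ1 : γ < 1) (π : S → A) (x y : S × A → ℝ)
    (hxy : (1 - γ • Pmat P π).mulVec x = y) :
    x = (Res P γ π).mulVec y := by
  rw [← hxy, Matrix.mulVec_mulVec, res_mul P hP γ hγ0 hγ1 π, Matrix.one_mulVec]

/-- `(I - γP_π)⁻¹ (γ P_π z) = (I - γP_π)⁻¹ z - z`. -/
lemma res_gp (P : S × A → S → ℝ) (hP : IsKernel P) (γ : ℝ)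
    (hγ0 : 0 ≤ γ) (hγ1 : γ < 1) (π : S → A) (z : S × A → ℝ) :
    (Res P γ π).mulVec ((γ • Pmat P π).mulVec z) =
      (Res P γ π).mulVec z - z := by
  have : (γ • Pmat P π : Matrix (S × A) (S × A) ℝ) = 1 - (1 - γ • Pmat P π) := by rw [sub_sub_cancel]
  rw [this, Matrix.mulVec_mulVec, Matrix.mul_sub, mul_one, res_mul P hP γ hγ0 hγ1 π,
    Matrix.sub_mulVec, Matrix.one_mulVec]

lemma pop_add (P : S × A → S → ℝ) (π : S → A) (f g : S × A → ℝ) (sa : S × A) :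
    Pop P π (fun sa' => f sa' + g sa') sa = Pop P π f sa + Pop P π g sa := by
  simp [Pop, mul_add, Finset.sum_add_distrib]

lemma pop_sub (P : S × A → S → ℝ) (π : S → A) (f g : S × A → ℝ) (sa : S × A) :
    Pop P π (fun sa' => f sa' - g sa') sa = Pop P π f sa - Pop P π g sa := by
  simp [Pop, mul_sub, Finset.sum_sub_distrib]

end Aux

/-- Greedy decomposition bound. -/
theorem greedy_decomposition_bound (P : S × A → S → ℝ) (hP : IsKernel P)
    (r : S × A → ℝ) (γ : ℝ) (hγ0 : 0 < γ) (hγ1 : γ < 1)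
    (qpi : (S → A) → S × A → ℝ)
    (hqpi : ∀ π' : S → A, Tpol P r γ π' (qpi π') = qpi π')
    (πstar : S → A) (hopt : ∀ (π' : S → A) (sa : S × A), qpi π' sa ≤ qpi πstar sa)
    (h : S × A → ℝ) (π' : S → A) (hgreedy : Greedy P r γ π' h) :
    ∀ sa : S × A,
      qpi πstar sa - qpi π' sa ≤
        (Res P γ πstar).mulVec (fun sa' => Tpol P r γ π' h sa' - h sa') sa -
          (Res P γ π').mulVec (fun sa' => Tpol P r γ π' h sa' - h sa') sa := by
  -- Notation
  set Δ : S × A → ℝ := fun sa' => Tpol P r γ π' h sa' - h sa' with hΔ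
  have hγ0' : (0:ℝ) ≤ γ := le_of_lt hγ0
  set qs : S × A → ℝ := qpi πstar with hqs
  set qp : S × A → ℝ := qpi π' with hqp
  set u : S × A → ℝ := fun sa => qs sa - Tpol P r γ π' h sa with hu
  set v : S × A → ℝ := fun sa => Tpol P r γ π' h sa - qp sa with hv
  -- Step 1: (I - γ P_{π*}) u ≤ γ P_{π*} Δ
  have hU : ∀ sa, (1 - γ • Pmat P πstar).mulVec u sa ≤ ((γ • Pmat P πstar).mulVec Δ) sa := by
    intro sa
    rw [M_mulVec, Matrix.smul_mulVec]
    simp only [Pi.smul_apply, smul_eq_mul, pmat_mulVec]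
    -- suffices: u sa ≤ γ * Pop πstar (u + Δ) sa = γ * Pop πstar (qs - h) sa
    have hsum : Pop P πstar u sa + Pop P πstar Δ sa = Pop P πstar (fun sa' => qs sa' - h sa') sa := by
      rw [← pop_add]
      congr 1
      funext sa'
      simp only [hu, hΔ]
      ring
    have hkey : u sa ≤ γ * Pop P πstar (fun sa' => qs sa' - h sa') sa := by
      -- u sa = T_{π*} qs sa - T_* h sa ≤ T_{π*} qs sa - T_{π*} h sa
      have h1 : qs sa = Tpol P r γ πstar qs sa := by rw [hqs, hqpi πstar]
      have h2 : Tpol P r γ π' h sa = Topt P r γ h sa := by rw [hgreedy]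
      have h3 : Tpol P r γ πstar h sa ≤ Topt P r γ h sa := by
        unfold Tpol Topt Pop
        have : ∀ s' : S, P sa s' * h (s', πstar s') ≤ P sa s' * ⨆ a', h (s', a') := by
          intro s'
          apply mul_le_mul_of_nonneg_left _ (hP.1 sa s')
          exact le_ciSup (f := fun a' => h (s', a'))
            (Set.Finite.bddAbove (Set.finite_range _)) (πstar s')
        have hsle := Finset.sum_le_sum (fun s' (_ : s' ∈ Finset.univ) => this s')
        nlinarith
      have h4 : Tpol P r γ πstar qs sa - Tpol P r γ πstar h sa
          = γ * Pop P πstar (fun sa' => qs sa' - h sa') sa := by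
        unfold Tpol
        rw [pop_sub]
        ring
      simp only [hu]
      rw [h1, h2]
      linarith
    rw [← hsum, mul_add] at hkey
    linarith
  -- Step 2: (I - γ P_{π'}) v = - γ P_{π'} Δ
  have hV : (1 - γ • Pmat P π').mulVec v = (γ • Pmat P π').mulVec (fun sa => -Δ sa) := by
    funext sa
    rw [M_mulVec, Matrix.smul_mulVec]
    simp only [Pi.smul_apply, smul_eq_mul, pmat_mulVec]
    -- v sa = T_{π'} h sa - T_{π'} qp sa = γ Pop π' (h - qp) sa, and h - qp = v - Δ
    have h1 : qp sa = Tpol P r γ π' qp sa := by rw [hqp, hqpi π']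
    have h2 : v sa = γ * Pop P π' (fun sa' => h sa' - qp sa') sa := by
      simp only [hv]
      rw [h1]
      unfold Tpol
      rw [pop_sub]
      ring
    have h3 : (fun sa' => h sa' - qp sa') = fun sa' => v sa' - Δ sa' := by
      funext sa'
      simp only [hv, hΔ]
      ring
    rw [h3, pop_sub] at h2
    have h4 : Pop P π' (fun sa' => -Δ sa') sa = -Pop P π' Δ sa := by
      have := pop_sub P π' (fun _ => 0) Δ sa
      simp only [zero_sub] at this
      rw [this]
      simp [Pop]
    rw [mul_sub] at h2
    rw [h4]
    linarith
  -- conclude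
  have hUb : ∀ sa, u sa ≤ (Res P γ πstar).mulVec ((γ • Pmat P πstar).mulVec Δ) sa :=
    solve_le P hP γ hγ0' hγ1 πstar u _ hU
  have hVe : v = (Res P γ π').mulVec ((γ • Pmat P π').mulVec (fun sa => -Δ sa)) :=
    solve_eq P hP γ hγ0' hγ1 π' v _ hV
  have hres1 := res_gp P hP γ hγ0' hγ1 πstar Δ
  have hres2 := res_gp P hP γ hγ0' hγ1 π' (fun sa => -Δ sa)
  intro sa
  have hU' : u sa ≤ (Res P γ πstar).mulVec Δ sa - Δ sa := by
    have := hUb sa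
    rw [hres1] at this
    simpa using this
  have hV' : v sa = -((Res P γ π').mulVec Δ sa) + Δ sa := by
    have := congrFun hVe sa
    rw [hres2] at this
    have hneg : (Res P γ π').mulVec (fun sa' => -Δ sa') = -(Res P γ π').mulVec Δ := by
      have : (fun sa' => -Δ sa') = -Δ := rfl
      rw [this, Matrix.mulVec_neg]
    rw [Pi.sub_apply] at this
    rw [hneg] at this
    simp only [Pi.neg_apply] at this
    linarith [this]
  have huv : qs sa - qp sa = u sa + v sa := by simp only [hu, hv]; ring
  rw [huv]
  linarith


end MoVIFormal
end
end

section
/- Upper bound on the MoVI residual. For every k ≥ 0, the MoVI iterates satisfy, componentwise, T_{π_{k+1}} h_k − h_k ≤ (1/(k+1)) ( q_{k+1} − q_0 + E_{k+1} ). -/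
open Finset MeasureTheory
open scoped MeasureTheory

noncomputable section

namespace MoVIFormal

variable {S A : Type} [Fintype S] [Fintype A] [Nonempty S] [Nonempty A]
  [DecidableEq S] [DecidableEq A]

lemma tpol_le_topt_aux (P : S × A → S → ℝ) (hP : ∀ sa s', 0 ≤ P sa s')
    (r : S × A → ℝ) (γ : ℝ) (hγ : 0 ≤ γ) (π : S → A) (v : S × A → ℝ) (sa : S × A) :
    Tpol P r γ π v sa ≤ Topt P r γ v sa := by
  unfold Tpol Topt Pop
  have h1 : ∀ s' ∈ Finset.univ (α := S),
      P sa s' * v (s', π s') ≤ P sa s' * (⨆ a', v (s', a')) := by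
    intro s' _
    exact mul_le_mul_of_nonneg_left
      (le_ciSup (Set.Finite.bddAbove (Set.finite_range fun a' => v (s', a'))) (π s'))
      (hP sa s')
  have := Finset.sum_le_sum h1
  nlinarith [this]

lemma movi_key (P : S × A → S → ℝ) (hP : IsKernel P)
    (r : S × A → ℝ) (γ : ℝ) (hγ0 : 0 < γ) (hγ1 : γ < 1)
    (π : ℕ → S → A) (q h : ℕ → S × A → ℝ) (ε : ℕ → S × A → ℝ)
    (hmovi : IsMoVI P r γ π q h ε) (k : ℕ) (sa : S × A) :
    ((k : ℝ) + 1) * (Tpol P r γ (π (k + 1)) (h k) sa - h k sa) ≤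
      q (k + 1) sa - q 0 sa + Ecum ε (k + 1) sa := by
  obtain ⟨h0, hg, hq, hh⟩ := hmovi
  induction k generalizing sa with
  | zero =>
    have hq0 := congrFun (hq 0) sa
    simp only [Nat.cast_zero, zero_add, one_mul, h0, Ecum]
    rw [Finset.Icc_self, Finset.sum_singleton]
    norm_num at hq0
    linarith
  | succ k ih =>
    -- abbreviations
    have hpos : (0 : ℝ) < (k : ℝ) + 2 := by positivity
    -- linearity of Pop
    have hA : ((k : ℝ) + 2) * Pop P (π (k + 2)) (h (k + 1)) sa =
        ((k : ℝ) + 1) * Pop P (π (k + 2)) (h k) sa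
          + Pop P (π (k + 2)) (q (k + 1)) sa := by
      simp only [Pop, hh k]
      rw [Finset.mul_sum, Finset.mul_sum, ← Finset.sum_add_distrib]
      refine Finset.sum_congr rfl fun s' _ => ?_
      field_simp
    have hTid : ((k : ℝ) + 2) * Tpol P r γ (π (k + 2)) (h (k + 1)) sa =
        ((k : ℝ) + 1) * Tpol P r γ (π (k + 2)) (h k) sa
          + Tpol P r γ (π (k + 2)) (q (k + 1)) sa := by
      unfold Tpol
      linear_combination γ * hA
    have hHid : ((k : ℝ) + 2) * h (k + 1) sa = ((k : ℝ) + 1) * h k sa + q (k + 1) sa := by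
      rw [hh k]
      field_simp
    have hle1 : Tpol P r γ (π (k + 2)) (h k) sa ≤ Tpol P r γ (π (k + 1)) (h k) sa := by
      have hgk : Tpol P r γ (π (k + 1)) (h k) = Topt P r γ (h k) := hg k
      rw [hgk]
      exact tpol_le_topt_aux P hP.1 r γ (le_of_lt hγ0) (π (k + 2)) (h k) sa
    have hq' : q (k + 2) sa = Tpol P r γ (π (k + 2)) (q (k + 1)) sa + ε (k + 2) sa :=
      congrFun (hq (k + 1)) sa
    have hE : Ecum ε (k + 2) sa = Ecum ε (k + 1) sa - ε (k + 2) sa := by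
      unfold Ecum
      rw [Finset.sum_Icc_succ_top (by omega : 1 ≤ k + 2)]
      ring
    have hcast : ((k + 1 : ℕ) : ℝ) + 1 = (k : ℝ) + 2 := by push_cast; ring
    rw [hcast]
    have step1 : ((k : ℝ) + 2) * (Tpol P r γ (π (k + 1 + 1)) (h (k + 1)) sa - h (k + 1) sa)
        = ((k : ℝ) + 1) * (Tpol P r γ (π (k + 2)) (h k) sa - h k sa)
          + (Tpol P r γ (π (k + 2)) (q (k + 1)) sa - q (k + 1) sa) := by
      have : π (k + 1 + 1) = π (k + 2) := by norm_num
      rw [this]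
      linear_combination hTid - hHid
    have step2 : ((k : ℝ) + 1) * (Tpol P r γ (π (k + 2)) (h k) sa - h k sa)
        ≤ ((k : ℝ) + 1) * (Tpol P r γ (π (k + 1)) (h k) sa - h k sa) := by
      apply mul_le_mul_of_nonneg_left _ (by positivity)
      linarith
    have := ih sa
    have hkk : q (k + 1 + 1) sa = q (k + 2) sa := by norm_num
    have hEE : Ecum ε (k + 1 + 1) sa = Ecum ε (k + 2) sa := by norm_num
    rw [hkk, hEE]
    linarith [step1, step2, this, hq', hE]

/-- Upper bound on the MoVI residual. -/
theorem movi_residual_upper_bound (P : S × A → S → ℝ) (hP : IsKernel P)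
    (r : S × A → ℝ) (γ : ℝ) (hγ0 : 0 < γ) (hγ1 : γ < 1)
    (π : ℕ → S → A) (q h : ℕ → S × A → ℝ) (ε : ℕ → S × A → ℝ)
    (hmovi : IsMoVI P r γ π q h ε) (k : ℕ) :
    ∀ sa : S × A,
      Tpol P r γ (π (k + 1)) (h k) sa - h k sa ≤
        (1 / (k + 1 : ℝ)) * (q (k + 1) sa - q 0 sa + Ecum ε (k + 1) sa) := by
  intro sa
  have hk1 : (0 : ℝ) < (k : ℝ) + 1 := by positivity
  have := movi_key P hP r γ hγ0 hγ1 π q h ε hmovi k sa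
  rw [show (1 / ((k : ℝ) + 1)) * (q (k + 1) sa - q 0 sa + Ecum ε (k + 1) sa)
      = (q (k + 1) sa - q 0 sa + Ecum ε (k + 1) sa) / ((k : ℝ) + 1) from by ring,
    le_div_iff₀ hk1, mul_comm]
  exact this

end MoVIFormal
end
end

section
/- Telescoped upper bound on the MoVI Bellman image. For every k ≥ 0, the MoVI iterates satisfy, componentwise, (k+1) T_{π_{k+1}} h_k ≤ Σ_{j=1}^{k+1} q_j − Σ_{j=1}^{k+1} ε_j. -/
open Finset MeasureTheory
open scoped MeasureTheory

noncomputable section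

namespace MoVIFormal

variable {S A : Type} [Fintype S] [Fintype A] [Nonempty S] [Nonempty A]
  [DecidableEq S] [DecidableEq A]

/-- Telescoped upper bound on the MoVI Bellman image. -/
theorem movi_bellman_image_upper_bound (P : S × A → S → ℝ) (hP : IsKernel P)
    (r : S × A → ℝ) (γ : ℝ) (hγ0 : 0 < γ) (hγ1 : γ < 1)
    (π : ℕ → S → A) (q h : ℕ → S × A → ℝ) (ε : ℕ → S × A → ℝ)
    (hmovi : IsMoVI P r γ π q h ε) (k : ℕ) :
    ∀ sa : S × A,
      (k + 1 : ℝ) * Tpol P r γ (π (k + 1)) (h k) sa ≤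
        (∑ j ∈ Finset.Icc 1 (k + 1), q j sa) - ∑ j ∈ Finset.Icc 1 (k + 1), ε j sa := by
  obtain ⟨h0, hgreedy, hq, hh⟩ := hmovi
  -- `T_π f ≤ T_* f` pointwise
  have key : ∀ (π' : S → A) (f : S × A → ℝ) (sa : S × A),
      Tpol P r γ π' f sa ≤ Topt P r γ f sa := by
    intro π' f sa
    unfold Tpol Topt Pop
    gcongr with s' _
    · exact hP.1 sa s'
    · exact le_ciSup (f := fun a' => f (s', a')) (Set.Finite.bddAbove (Set.finite_range _)) (π' s')
  -- greedy domination : any policy's Bellman image of `h m` is below that of `π (m+1)`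
  have hdom : ∀ (m : ℕ) (π' : S → A) (sa : S × A),
      Tpol P r γ π' (h m) sa ≤ Tpol P r γ (π (m + 1)) (h m) sa := by
    intro m π' sa
    calc Tpol P r γ π' (h m) sa ≤ Topt P r γ (h m) sa := key π' (h m) sa
      _ = Tpol P r γ (π (m + 1)) (h m) sa := (congrFun (hgreedy m) sa).symm
  -- main induction
  have main : ∀ k : ℕ, ∀ sa : S × A,
      (k + 1 : ℝ) * Tpol P r γ (π (k + 1)) (h k) sa ≤
        ∑ j ∈ Finset.Icc 1 (k + 1), Tpol P r γ (π j) (q (j - 1)) sa := by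
    intro k
    induction k with
    | zero =>
      intro sa
      simp [h0]
    | succ n ih =>
      intro sa
      have hcoef : ((n : ℝ) + 2) ≠ 0 := by positivity
      -- affinity of the Bellman operator
      have hsum : ∀ π' : S → A,
          ∑ s', P sa s' * h (n + 1) (s', π' s') =
          (((n : ℝ) + 1) * ∑ s', P sa s' * h n (s', π' s') +
            ∑ s', P sa s' * q (n + 1) (s', π' s')) / ((n : ℝ) + 2) := by
        intro π'
        rw [eq_div_iff hcoef, Finset.sum_mul, Finset.mul_sum, ← Finset.sum_add_distrib]
        simp only [hh n]
        apply Finset.sum_congr rfl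
        intro s' _
        field_simp
      have aff : ((n : ℕ) + 1 + 1 : ℝ) * Tpol P r γ (π (n + 1 + 1)) (h (n + 1)) sa =
          ((n : ℝ) + 1) * Tpol P r γ (π (n + 2)) (h n) sa +
            Tpol P r γ (π (n + 2)) (q (n + 1)) sa := by
        unfold Tpol Pop
        rw [show (n:ℕ) + 1 + 1 = n + 2 from rfl, hsum (π (n + 2))]
        push_cast
        field_simp
        ring
      push_cast
      rw [show ((n:ℝ) + 1 + 1) = ((n : ℕ) + 1 + 1 : ℝ) by push_cast; ring] at *
      rw [aff]
      have step1 : ((n : ℝ) + 1) * Tpol P r γ (π (n + 2)) (h n) sa ≤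
          ((n : ℝ) + 1) * Tpol P r γ (π (n + 1)) (h n) sa := by
        apply mul_le_mul_of_nonneg_left (hdom n (π (n + 2)) sa)
        positivity
      have step2 : ((n : ℝ) + 1) * Tpol P r γ (π (n + 1)) (h n) sa ≤
          ∑ j ∈ Finset.Icc 1 (n + 1), Tpol P r γ (π j) (q (j - 1)) sa := by
        have := ih sa
        push_cast at this
        exact this
      rw [Finset.sum_Icc_succ_top (by omega : 1 ≤ n + 1 + 1)]
      have : (n + 1 + 1) - 1 = n + 1 := by omega
      rw [this]
      linarith [step1, step2]
  intro sa
  have hrw : ∑ j ∈ Finset.Icc 1 (k + 1), Tpol P r γ (π j) (q (j - 1)) sa =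
      ∑ j ∈ Finset.Icc 1 (k + 1), (q j sa - ε j sa) := by
    apply Finset.sum_congr rfl
    intro j hj
    obtain ⟨h1, _⟩ := Finset.mem_Icc.mp hj
    obtain ⟨m, rfl⟩ := Nat.exists_eq_add_of_le h1
    rw [show 1 + m = m + 1 from by omega, hq m]
    simp
  have := main k sa
  rw [hrw, Finset.sum_sub_distrib] at this
  exact this


end MoVIFormal
end
end

section
/- Telescoped lower bound on the MoVI Bellman image. For every k ≥ 0, the MoVI iterates satisfy, componentwise, (k+1) T_{π_{k+1}} h_k ≥ Σ_{j=1}^{k} T_{π_j} q_j + T_{π_1} q_0. -/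
open Finset MeasureTheory
open scoped MeasureTheory

noncomputable section

namespace MoVIFormal

variable {S A : Type} [Fintype S] [Fintype A] [Nonempty S] [Nonempty A]
  [DecidableEq S] [DecidableEq A]

lemma tpol_le_topt (P : S × A → S → ℝ) (hP : IsKernel P)
    (r : S × A → ℝ) (γ : ℝ) (hγ0 : 0 ≤ γ) (π' : S → A) (g : S × A → ℝ) (sa : S × A) :
    Tpol P r γ π' g sa ≤ Topt P r γ g sa := by
  unfold Tpol Topt Pop
  refine add_le_add_right (mul_le_mul_of_nonneg_left (Finset.sum_le_sum fun s' _ => ?_) hγ0) _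
  exact mul_le_mul_of_nonneg_left
    (le_ciSup (f := fun a' => g (s', a')) (Set.Finite.bddAbove (Set.finite_range _)) (π' s')) (hP.1 sa s')

/-- Telescoped lower bound on the MoVI Bellman image. -/
theorem movi_bellman_image_lower_bound (P : S × A → S → ℝ) (hP : IsKernel P)
    (r : S × A → ℝ) (γ : ℝ) (hγ0 : 0 < γ) (hγ1 : γ < 1)
    (π : ℕ → S → A) (q h : ℕ → S × A → ℝ) (ε : ℕ → S × A → ℝ)
    (hmovi : IsMoVI P r γ π q h ε) (k : ℕ) :
    ∀ sa : S × A,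
      (∑ j ∈ Finset.Icc 1 k, Tpol P r γ (π j) (q j) sa) + Tpol P r γ (π 1) (q 0) sa ≤
        (k + 1 : ℝ) * Tpol P r γ (π (k + 1)) (h k) sa := by
  obtain ⟨h0, hgreedy, hq, hh⟩ := hmovi
  induction k with
  | zero =>
    intro sa
    simp [h0]
  | succ k ih =>
    intro sa
    -- split off the top term of the sum
    rw [Finset.sum_Icc_succ_top (Nat.le_add_left 1 k)]
    -- greedy step: Tpol (π (k+2)) (h (k+1)) = Topt (h (k+1)) ≥ Tpol (π (k+1)) (h (k+1))
    have hge : Tpol P r γ (π (k + 1)) (h (k + 1)) sa ≤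
        Tpol P r γ (π (k + 1 + 1)) (h (k + 1)) sa := by
      rw [hgreedy (k + 1)]
      exact tpol_le_topt P hP r γ hγ0.le (π (k + 1)) (h (k + 1)) sa
    -- affinity: (k+2) Tpol π (h (k+1)) = (k+1) Tpol π (h k) + Tpol π (q (k+1))
    have haff : ((k : ℝ) + 2) * Tpol P r γ (π (k + 1)) (h (k + 1)) sa =
        ((k : ℝ) + 1) * Tpol P r γ (π (k + 1)) (h k) sa +
          Tpol P r γ (π (k + 1)) (q (k + 1)) sa := by
      unfold Tpol Pop
      rw [hh k]
      have hsplit : ∑ s', P sa s' * ((((k : ℕ) : ℝ) + 1) * h k (s', π (k + 1) s') +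
              q (k + 1) (s', π (k + 1) s')) =
          (((k : ℕ) : ℝ) + 1) * (∑ s', P sa s' * h k (s', π (k + 1) s')) +
            ∑ s', P sa s' * q (k + 1) (s', π (k + 1) s') := by
        rw [Finset.mul_sum, ← Finset.sum_add_distrib]
        exact Finset.sum_congr rfl fun s' _ => by ring
      have hk2 : (((k : ℕ) : ℝ) + 2) ≠ 0 := by positivity
      simp only [← mul_div_assoc]
      rw [← Finset.sum_div, hsplit]
      push_cast
      field_simp
      ring
    have key : ((k : ℝ) + 1) * Tpol P r γ (π (k + 1)) (h k) sa +
          Tpol P r γ (π (k + 1)) (q (k + 1)) sa ≤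
        ((k : ℝ) + 2) * Tpol P r γ (π (k + 1 + 1)) (h (k + 1)) sa := by
      rw [← haff]
      have : (0 : ℝ) ≤ (k : ℝ) + 2 := by positivity
      nlinarith [hge]
    have ihsa := ih sa
    push_cast
    push_cast at ihsa
    linarith [key, ihsa]

end MoVIFormal
end
end

section
/- One-step residual recursion for MoVI. For every j ≥ 1, the MoVI iterates satisfy the exact identity T_{π_j} q_j − q_j = γ P_{π_j} (T_{π_j} q_{j−1} − q_{j−1}) − (I − γ P_{π_j}) ε_j. -/
open Finset MeasureTheory
open scoped MeasureTheory

noncomputable section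

namespace MoVIFormal

variable {S A : Type} [Fintype S] [Fintype A] [Nonempty S] [Nonempty A]
  [DecidableEq S] [DecidableEq A]

/-- One-step residual recursion for MoVI. -/
theorem movi_residual_recursion (P : S × A → S → ℝ) (hP : IsKernel P)
    (r : S × A → ℝ) (γ : ℝ) (hγ0 : 0 < γ) (hγ1 : γ < 1)
    (π : ℕ → S → A) (q h : ℕ → S × A → ℝ) (ε : ℕ → S × A → ℝ)
    (hmovi : IsMoVI P r γ π q h ε) (j : ℕ) (hj : 1 ≤ j) :
    ∀ sa : S × A,
      Tpol P r γ (π j) (q j) sa - q j sa =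
        γ * Pop P (π j) (fun sa' => Tpol P r γ (π j) (q (j - 1)) sa' - q (j - 1) sa') sa -
          (1 - γ • Pmat P (π j)).mulVec (ε j) sa := by
  intro sa
  have hqe : q j = fun x => Tpol P r γ (π j) (q (j - 1)) x + ε j x := by
    have := hmovi.2.2.1 (j - 1)
    rwa [Nat.sub_add_cancel hj] at this
  have hmat : ∀ v : S × A → ℝ, (Pmat P (π j)).mulVec v sa = Pop P (π j) v sa := by
    intro v
    simp only [Matrix.mulVec, dotProduct, Pmat, Pop, Fintype.sum_prod_type,
      ite_mul, zero_mul]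
    refine Finset.sum_congr rfl fun s' _ => ?_
    simp
  have hsub : (1 - γ • Pmat P (π j)).mulVec (ε j) sa
      = ε j sa - γ * Pop P (π j) (ε j) sa := by
    rw [Matrix.sub_mulVec, Matrix.smul_mulVec, Matrix.one_mulVec]
    simp [hmat]
  have hadd : ∀ f g : S × A → ℝ,
      Pop P (π j) (fun x => f x + g x) sa = Pop P (π j) f sa + Pop P (π j) g sa := by
    intro f g
    simp [Pop, mul_add, Finset.sum_add_distrib]
  have hsub' : ∀ f g : S × A → ℝ,
      Pop P (π j) (fun x => f x - g x) sa = Pop P (π j) f sa - Pop P (π j) g sa := by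
    intro f g
    simp [Pop, mul_sub, Finset.sum_sub_distrib]
  have hsmul : ∀ (c : ℝ) (f : S × A → ℝ),
      Pop P (π j) (fun x => c * f x) sa = c * Pop P (π j) f sa := by
    intro c f
    simp [Pop, Finset.mul_sum, mul_left_comm]
  have hT : Pop P (π j) (Tpol P r γ (π j) (q (j - 1))) sa
      = Pop P (π j) r sa + γ * Pop P (π j) (Pop P (π j) (q (j - 1))) sa := by
    show Pop P (π j) (fun x => r x + γ * Pop P (π j) (q (j - 1)) x) sa = _
    rw [hadd, hsmul]
  rw [hsub, hsub', hT]
  conv_lhs => rw [hqe]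
  simp only [Tpol, hadd, hsmul]
  ring

end MoVIFormal
end
end

section
/- Consecutive greedy policies improve on the MoVI iterates. For every j ≥ 1, the MoVI iterates satisfy, componentwise, T_{π_{j+1}} q_j − T_{π_j} q_j ≥ 0. (Indeed T_{π_{j+1}} q_j − T_{π_j} q_j = (j+1)(T_{π_{j+1}} h_j − T_{π_j} h_j) + j (T_{π_j} h_{j−1} − T_{π_{j+1}} h_{j−1}), and both terms are nonnegative since π_{j+1} ∈ 𝒢(h_j) and π_j ∈ 𝒢(h_{j−1}).) -/
open Finset MeasureTheory
open scoped MeasureTheory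

noncomputable section

namespace MoVIFormal

variable {S A : Type} [Fintype S] [Fintype A] [Nonempty S] [Nonempty A]
  [DecidableEq S] [DecidableEq A]

lemma pop_le_of_greedy (P : S × A → S → ℝ) (hP : IsKernel P)
    (r : S × A → ℝ) (γ : ℝ) (hγ0 : 0 < γ) (π π' : S → A) (f : S × A → ℝ)
    (hg : Greedy P r γ π' f) (sa : S × A) :
    Pop P π f sa ≤ Pop P π' f sa := by
  have h1 : Tpol P r γ π f sa ≤ Topt P r γ f sa := by
    unfold Tpol Topt Pop
    apply add_le_add_right
    apply mul_le_mul_of_nonneg_left _ hγ0.le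
    apply Finset.sum_le_sum
    intro s' _
    exact mul_le_mul_of_nonneg_left
      (le_ciSup (Set.Finite.bddAbove (Set.finite_range fun a' => f (s', a'))) (π s')) (hP.1 sa s')
  rw [← hg] at h1
  simp only [Tpol, add_le_add_iff_left] at h1
  exact le_of_mul_le_mul_left h1 hγ0

/-- Consecutive greedy policies improve on the MoVI iterates. -/
theorem movi_consecutive_greedy_improvement (P : S × A → S → ℝ) (hP : IsKernel P)
    (r : S × A → ℝ) (γ : ℝ) (hγ0 : 0 < γ) (hγ1 : γ < 1)
    (π : ℕ → S → A) (q h : ℕ → S × A → ℝ) (ε : ℕ → S × A → ℝ)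
    (hmovi : IsMoVI P r γ π q h ε) (j : ℕ) (hj : 1 ≤ j) :
    ∀ sa : S × A, 0 ≤ Tpol P r γ (π (j + 1)) (q j) sa - Tpol P r γ (π j) (q j) sa := by
  obtain ⟨h0, hg, hqrec, hhrec⟩ := hmovi
  obtain ⟨k, rfl⟩ : ∃ k, j = k + 1 := ⟨j - 1, by omega⟩
  have hk2 : (k : ℝ) + 2 ≠ 0 := by positivity
  have hqj : ∀ sa, q (k + 1) sa = ((k : ℝ) + 2) * h (k + 1) sa - ((k : ℝ) + 1) * h k sa := by
    intro sa
    have := congrFun (hhrec k) sa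
    rw [this]
    field_simp
    ring
  intro sa
  have lin : ∀ π' : S → A, Pop P π' (q (k + 1)) sa
      = ((k : ℝ) + 2) * Pop P π' (h (k + 1)) sa - ((k : ℝ) + 1) * Pop P π' (h k) sa := by
    intro π'
    simp only [Pop, hqj]
    rw [Finset.mul_sum, Finset.mul_sum, ← Finset.sum_sub_distrib]
    exact Finset.sum_congr rfl fun s' _ => by ring
  have A1 := pop_le_of_greedy P hP r γ hγ0 (π (k + 1)) (π (k + 2)) (h (k + 1)) (hg (k + 1)) sa
  have A2 := pop_le_of_greedy P hP r γ hγ0 (π (k + 2)) (π (k + 1)) (h k) (hg k) sa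
  have hnum : (k : ℝ) + 1 + 1 = (k : ℝ) + 2 := by ring
  simp only [Tpol, show k + 1 + 1 = k + 2 from rfl, lin]
  have h1 : ((k : ℝ) + 2) * Pop P (π (k + 1)) (h (k + 1)) sa
      ≤ ((k : ℝ) + 2) * Pop P (π (k + 2)) (h (k + 1)) sa := by
    apply mul_le_mul_of_nonneg_left A1 (by positivity)
  have h2 : ((k : ℝ) + 1) * Pop P (π (k + 2)) (h k) sa
      ≤ ((k : ℝ) + 1) * Pop P (π (k + 1)) (h k) sa := by
    apply mul_le_mul_of_nonneg_left A2 (by positivity)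
  nlinarith [hγ0.le]

end MoVIFormal
end
end

section
/- Recursion on the MoVI averaged values (Lemma A.2). For every k ≥ 2, the MoVI iterates satisfy the exact identity (k+1) h_k = k h_{k−1} + T_{π_k}[k h_{k−1}] − γ P_{π_k}[(k−1) h_{k−2}] + ε_k, where T_{π}[v] denotes r + γ P_π v. -/
open Finset MeasureTheory
open scoped MeasureTheory

noncomputable section

namespace MoVIFormal

variable {S A : Type} [Fintype S] [Fintype A] [Nonempty S] [Nonempty A]
  [DecidableEq S] [DecidableEq A]

/-- Lemma A.2: recursion on the MoVI averaged values. -/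
theorem movi_averaged_recursion (P : S × A → S → ℝ) (hP : IsKernel P)
    (r : S × A → ℝ) (γ : ℝ) (hγ0 : 0 < γ) (hγ1 : γ < 1)
    (π : ℕ → S → A) (q h : ℕ → S × A → ℝ) (ε : ℕ → S × A → ℝ)
    (hmovi : IsMoVI P r γ π q h ε) (k : ℕ) (hk : 2 ≤ k) :
    ∀ sa : S × A,
      (k + 1 : ℝ) * h k sa =
        (k : ℝ) * h (k - 1) sa +
            Tpol P r γ (π k) (fun sa' => (k : ℝ) * h (k - 1) sa') sa -
          γ * Pop P (π k) (fun sa' => ((k - 1 : ℕ) : ℝ) * h (k - 2) sa') sa + ε k sa := by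
  obtain ⟨hh0, hgr, hq, hh⟩ := hmovi
  obtain ⟨m, rfl⟩ := Nat.exists_eq_add_of_le hk
  have ek : 2 + m = m + 2 := by omega
  rw [ek]
  have e1 : m + 2 - 1 = m + 1 := by omega
  have e2 : m + 2 - 2 = m := by omega
  rw [e1, e2]
  intro sa
  -- q (m+1) in terms of h
  have hq1 : ∀ sb : S × A, q (m + 1) sb =
      ((m : ℝ) + 2) * h (m + 1) sb - ((m : ℝ) + 1) * h m sb := by
    intro sb
    have h1 := congrFun (hh m) sb
    have hm2 : ((m : ℝ) + 2) ≠ 0 := by positivity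
    field_simp at h1
    linarith
  -- (m+3) h_{m+2} = (m+2) h_{m+1} + q_{m+2}
  have h2 := congrFun (hh (m + 1)) sa
  have hm3 : ((m : ℝ) + 1 + 2) ≠ 0 := by positivity
  push_cast at h2
  rw [eq_div_iff hm3] at h2
  -- q (m+2) via Bellman
  have h3 := congrFun (hq (m + 1)) sa
  simp only [Tpol] at h3
  -- linearity of Pop
  have hlin : Pop P (π (m + 2)) (q (m + 1)) sa =
      Pop P (π (m + 2)) (fun sa' => ((m : ℝ) + 2) * h (m + 1) sa') sa -
        Pop P (π (m + 2)) (fun sa' => ((m : ℝ) + 1) * h m sa') sa := by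
    simp only [Pop, ← Finset.sum_sub_distrib, ← mul_sub]
    refine Finset.sum_congr rfl fun s' _ => ?_
    rw [hq1]
  rw [hlin] at h3
  simp only [Tpol, Pop] at *
  push_cast
  -- match the casts in the goal: ↑(m+1) vs ↑m + 1
  have cast1 : (((m + 1 : ℕ) : ℝ)) = (m : ℝ) + 1 := by push_cast; ring
  have cast2 : (((m + 2 : ℕ) : ℝ)) = (m : ℝ) + 2 := by push_cast; ring
  rw [cast1, cast2] at *
  nlinarith [h2, h3]

end MoVIFormal
end
end

section
/- ψ-form rewriting of MoVI. Define ψ_k = (k+1) h_k for k ≥ 0 (so ψ_k = Σ_{j=0}^{k} q_j) and ψ_{−1} = 0. Then for every k ≥ 1 the MoVI iterates satisfy ψ_k = ψ_{k−1} + T_{π_k} ψ_{k−1} − γ P_{π_k} ψ_{k−2} + ε_k, where T_π v = r + γ P_π v. -/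
open Finset MeasureTheory
open scoped MeasureTheory

noncomputable section

namespace MoVIFormal

variable {S A : Type} [Fintype S] [Fintype A] [Nonempty S] [Nonempty A]
  [DecidableEq S] [DecidableEq A]

/-- ψ-form rewriting of MoVI (with `Ψ (k+1) = ψ_k` and `Ψ 0 = ψ_{-1} = 0`). -/
theorem movi_psi_form (P : S × A → S → ℝ) (hP : IsKernel P)
    (r : S × A → ℝ) (γ : ℝ) (hγ0 : 0 < γ) (hγ1 : γ < 1)
    (π : ℕ → S → A) (q h : ℕ → S × A → ℝ) (ε : ℕ → S × A → ℝ)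
    (hmovi : IsMoVI P r γ π q h ε)
    (Ψ : ℕ → S × A → ℝ) (hΨ0 : Ψ 0 = fun _ => 0)
    (hΨ : ∀ k : ℕ, Ψ (k + 1) = fun sa => (k + 1 : ℝ) * h k sa) :
    ∀ k : ℕ, 1 ≤ k → ∀ sa : S × A,
      Ψ (k + 1) sa =
        Ψ k sa + Tpol P r γ (π k) (Ψ k) sa - γ * Pop P (π k) (Ψ (k - 1)) sa + ε k sa := by
  obtain ⟨h0, hg, hq, hh⟩ := hmovi
  have hstep : ∀ k : ℕ, ∀ sa, Ψ (k + 1) sa = Ψ k sa + q k sa := by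
    intro k sa
    cases k with
    | zero => simp [hΨ, hΨ0, h0]
    | succ m =>
      rw [hΨ (m + 1), hh m, hΨ m]
      push_cast
      have : (m : ℝ) + 2 ≠ 0 := by positivity
      field_simp
      ring
  intro k hk sa
  cases k with
  | zero => omega
  | succ m =>
    simp only [Nat.add_sub_cancel]
    rw [hstep (m + 1) sa, hq m]
    simp only [Tpol, Pop]
    have hsum : ∑ s', P sa s' * Ψ (m + 1) (s', π (m + 1) s')
        = ∑ s', P sa s' * Ψ m (s', π (m + 1) s')
          + ∑ s', P sa s' * q m (s', π (m + 1) s') := by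
      rw [← Finset.sum_add_distrib]
      apply Finset.sum_congr rfl
      intro s' _
      rw [hstep m]
      ring
    rw [hsum]
    ring

end MoVIFormal
end
end
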